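/- ∫₀^{π/2} θ·log(cos(θ/2)) dθ = -(π²/8)·log 2 + (π/2)·G - (7/8)·ζ_E(3), where G is Catalan's constant and ζ_E(3) = Σ_{n=1}^∞ (-1)^{n+1}/n³. -/

import Mathlib

set_option maxHeartbeats 1000000

open Real Filter MeasureTheory intervalIntegral Topology

noncomputable def pterm (n : ℕ) : ℝ := (-1)^(n+1) * Real.sin (n*(π/2)) / n^2
noncomputable def qterm (n : ℕ) : ℝ := (-1)^(n+1) * (Real.cos (n*(π/2)) - 1) / n^3
noncomputable def aterm (n : ℕ) : ℝ := (π/2) * pterm n + qterm n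


lemma integral_x_mul_cos {c : ℝ} (hc : c ≠ 0) (b : ℝ) :
    ∫ x in (0:ℝ)..b, x * Real.cos (c * x)
      = b * Real.sin (c * b) / c + (Real.cos (c * b) - 1) / c ^ 2 := by
  have hu : ∀ x ∈ Set.uIcc (0:ℝ) b, HasDerivAt (fun y : ℝ => y) 1 x := fun x _ => hasDerivAt_id x
  have hv : ∀ x ∈ Set.uIcc (0:ℝ) b,
      HasDerivAt (fun y : ℝ => Real.sin (c * y) / c) (Real.cos (c * x)) x := by
    intro x _
    have h : HasDerivAt (fun y : ℝ => Real.sin (c * y) / c) (Real.cos (c * x) * (c * 1) / c) x :=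
      ((Real.hasDerivAt_sin (c * x)).comp x ((hasDerivAt_id x).const_mul c)).div_const c
    convert h using 1
    field_simp
  have H := intervalIntegral.integral_mul_deriv_eq_deriv_mul hu hv
    (continuous_const.intervalIntegrable 0 b)
    ((Real.continuous_cos.comp (continuous_const.mul continuous_id)).intervalIntegrable 0 b)
  have hs : ∫ x in (0:ℝ)..b, Real.sin (c * x) = (1 - Real.cos (c * b)) / c := by
    have := intervalIntegral.integral_comp_mul_left (a := (0:ℝ)) (b := b)
      (fun y => Real.sin y) hc
    rw [this]
    simp [integral_sin, hc]
    ring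
  rw [H]
  simp only [one_mul]
  rw [intervalIntegral.integral_div, hs]
  field_simp
  ring


-- series for log |1 + r e^{iθ}|
lemma logabs_series {r : ℝ} (hr : |r| < 1) (θ : ℝ) :
    HasSum (fun n : ℕ => (-1 : ℝ) ^ (n + 1) * r ^ n * Real.cos (n * θ) / n)
      (Real.log (‖1 + r * Complex.exp (θ * Complex.I)‖)) := by
  have hz : ‖(r : ℂ) * Complex.exp (θ * Complex.I)‖ < 1 := by
    simpa [Complex.norm_exp_ofReal_mul_I, abs] using hr
  have h := (Complex.hasSum_taylorSeries_log hz).mapL Complex.reCLM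
  rw [Complex.reCLM_apply, Complex.log_re] at h
  convert h using 2 with n
  rw [mul_pow, ← Complex.exp_nat_mul]
  have : (n : ℂ) * (θ * Complex.I) = ((n * θ : ℝ) : ℂ) * Complex.I := by push_cast; ring
  rw [this]
  have h2 : ((-1 : ℂ) ^ (n + 1) * ((r : ℂ) ^ n * Complex.exp (((n * θ : ℝ) : ℂ) * Complex.I)) / n)
      = (((-1 : ℝ) ^ (n + 1) * r ^ n / n : ℝ) : ℂ) * Complex.exp (((n * θ : ℝ) : ℂ) * Complex.I) := by
    push_cast
    ring
  rw [h2, Complex.reCLM_apply, Complex.re_ofReal_mul, Complex.exp_ofReal_mul_I_re]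
  ring

lemma hasSum_I_r {r : ℝ} (hr0 : 0 ≤ r) (hr1 : r < 1) :
    HasSum (fun n : ℕ => aterm n * r ^ n)
      (∫ θ in (0:ℝ)..(π/2), θ * Real.log (‖1 + r * Complex.exp (θ * Complex.I)‖)) := by
  have habs : |r| < 1 := by rwa [abs_of_nonneg hr0]
  have key : HasSum
      (fun n : ℕ => ∫ θ in (0:ℝ)..(π/2), θ * ((-1 : ℝ) ^ (n + 1) * r ^ n * Real.cos (n * θ) / n))
      (∫ θ in (0:ℝ)..(π/2), θ * Real.log (‖1 + r * Complex.exp (θ * Complex.I)‖)) := by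
    apply intervalIntegral.hasSum_integral_of_dominated_convergence
      (bound := fun (n : ℕ) (_ : ℝ) => 2 * r ^ n)
    · intro n
      apply Continuous.aestronglyMeasurable
      continuity
    · intro n
      filter_upwards with t ht
      rw [Set.uIoc_of_le (by positivity : (0:ℝ) ≤ π/2)] at ht
      have ht2 : |t| ≤ π / 2 := by
        rw [abs_of_nonneg ht.1.le]; exact ht.2
      have hpi : π / 2 ≤ 2 := by
        nlinarith [Real.pi_le_four]
      rcases Nat.eq_zero_or_pos n with rfl | hn
      · simp
      have h1 : |(-1 : ℝ) ^ (n + 1) * r ^ n * Real.cos (n * t) / n| ≤ r ^ n := by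
        rw [abs_div, abs_mul, abs_mul, abs_pow, abs_pow, abs_neg, abs_one, one_pow, one_mul,
          abs_of_nonneg hr0]
        rw [Nat.abs_cast]
        have hn1 : (1:ℝ) ≤ (n:ℝ) := by exact_mod_cast hn
        calc r ^ n * |Real.cos (n * t)| / n ≤ r ^ n * 1 / 1 := by
              apply div_le_div₀ (by positivity) _ one_pos hn1
              exact mul_le_mul_of_nonneg_left (Real.abs_cos_le_one _) (by positivity)
          _ = r ^ n := by ring
      rw [Real.norm_eq_abs, abs_mul]
      calc |t| * |(-1 : ℝ) ^ (n + 1) * r ^ n * Real.cos (n * t) / n| ≤ 2 * r ^ n := by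
            apply mul_le_mul (le_trans ht2 hpi) h1 (abs_nonneg _) (by norm_num)
        _ = 2 * r ^ n := rfl
    · filter_upwards with t _
      exact (summable_geometric_of_lt_one hr0 hr1).mul_left 2
    · apply _root_.intervalIntegrable_const
    · filter_upwards with t _
      exact (logabs_series habs t).mul_left t
  convert key using 2 with n
  rcases Nat.eq_zero_or_pos n with rfl | hn
  · simp [aterm, pterm, qterm]
  have hc : ((n:ℝ)) ≠ 0 := by positivity
  have : (fun θ : ℝ => θ * ((-1 : ℝ) ^ (n + 1) * r ^ n * Real.cos (n * θ) / n))
      = fun θ : ℝ => ((-1 : ℝ) ^ (n + 1) * r ^ n / n) * (θ * Real.cos ((n:ℝ) * θ)) := by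
    funext θ; ring
  rw [this, intervalIntegral.integral_const_mul, integral_x_mul_cos hc]
  simp only [aterm, pterm, qterm]
  field_simp

lemma abs_pterm_le (n : ℕ) : |pterm n| ≤ 1 / (n:ℝ)^2 := by
  rcases Nat.eq_zero_or_pos n with rfl | hn
  · simp [pterm]
  unfold pterm
  rw [abs_div, abs_mul, abs_pow, abs_neg, abs_one, one_pow, one_mul, abs_pow, Nat.abs_cast]
  gcongr
  exact Real.abs_sin_le_one _

lemma abs_qterm_le (n : ℕ) : |qterm n| ≤ 2 / (n:ℝ)^2 := by
  rcases Nat.eq_zero_or_pos n with rfl | hn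
  · simp [qterm]
  have hn1 : (1:ℝ) ≤ (n:ℝ) := by exact_mod_cast hn
  unfold qterm
  rw [abs_div, abs_mul, abs_pow, abs_neg, abs_one, one_pow, one_mul, abs_pow, Nat.abs_cast]
  have h1 : |Real.cos (n*(π/2)) - 1| ≤ 2 := by
    have := Real.abs_cos_le_one ((n:ℝ)*(π/2))
    rw [abs_sub_le_iff]
    constructor <;> nlinarith [abs_le.mp this]
  calc |Real.cos (n*(π/2)) - 1| / (n:ℝ)^3 ≤ 2 / (n:ℝ)^2 := by
        rw [div_le_div_iff₀ (by positivity) (by positivity)]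
        calc |Real.cos (n*(π/2)) - 1| * (n:ℝ)^2 ≤ 2 * (n:ℝ)^2 := by
              exact mul_le_mul_of_nonneg_right h1 (by positivity)
          _ ≤ 2 * (n:ℝ)^3 := by nlinarith
        
lemma summable_abs_aterm : Summable (fun n => |aterm n|) := by
  have hs : Summable (fun n : ℕ => (π/2 + 2) * (1 / (n:ℝ)^2)) := by
    apply Summable.mul_left
    exact (Real.summable_one_div_nat_pow).mpr one_lt_two
  apply Summable.of_nonneg_of_le (fun n => abs_nonneg _) _ hs
  intro n
  unfold aterm
  calc |(π/2) * pterm n + qterm n| ≤ |(π/2) * pterm n| + |qterm n| := abs_add_le _ _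
    _ ≤ (π/2) * (1/(n:ℝ)^2) + 2/(n:ℝ)^2 := by
        rw [abs_mul, abs_of_pos (by positivity : (0:ℝ) < π/2)]
        gcongr
        · exact abs_pterm_le n
        · exact abs_qterm_le n
    _ = (π/2 + 2) * (1 / (n:ℝ)^2) := by ring

lemma summable_aterm : Summable aterm :=
  (summable_abs_aterm).of_abs

lemma abs_lower (r θ : ℝ) (hr0 : 0 ≤ r) (hθ1 : 0 ≤ θ) (hθ2 : θ ≤ π/2) :
    1 ≤ ‖1 + r * Complex.exp (θ * Complex.I)‖ := by
  have hre : (1 + (r:ℂ) * Complex.exp (θ * Complex.I)).re = 1 + r * Real.cos θ := by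
    simp [Complex.add_re, Complex.re_ofReal_mul, Complex.exp_ofReal_mul_I_re]
  have hcos : 0 ≤ Real.cos θ := Real.cos_nonneg_of_mem_Icc ⟨by linarith [Real.pi_pos], hθ2⟩
  calc (1:ℝ) ≤ 1 + r * Real.cos θ := by nlinarith
    _ = (1 + (r:ℂ) * Complex.exp (θ * Complex.I)).re := hre.symm
    _ ≤ ‖1 + r * Complex.exp (θ * Complex.I)‖ := Complex.re_le_norm _

lemma abs_upper (r θ : ℝ) (hr0 : 0 ≤ r) (hr1 : r ≤ 1) :
    ‖1 + r * Complex.exp (θ * Complex.I)‖ ≤ 2 := by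
  calc ‖1 + r * Complex.exp (θ * Complex.I)‖
      ≤ ‖(1:ℂ)‖ + ‖(r:ℂ) * Complex.exp (θ * Complex.I)‖ :=
        norm_add_le _ _
    _ = 1 + |r| := by simp [Complex.norm_exp_ofReal_mul_I, Complex.norm_real]
    _ ≤ 2 := by rw [abs_of_nonneg hr0]; linarith

lemma tendstoA :
    Tendsto (fun r : ℝ => ∫ θ in (0:ℝ)..(π/2),
        θ * Real.log (‖1 + r * Complex.exp (θ * Complex.I)‖)) (𝓝[<] (1:ℝ))
      (𝓝 (∫ θ in (0:ℝ)..(π/2), θ * Real.log (‖1 + Complex.exp (θ * Complex.I)‖))) := by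
  have hIco : Set.Ico (0:ℝ) 1 ∈ 𝓝[<] (1:ℝ) :=
    Ico_mem_nhdsLT_of_mem (by constructor <;> norm_num)
  have key := intervalIntegral.tendsto_integral_filter_of_dominated_convergence
    (μ := volume) (a := (0:ℝ)) (b := π/2)
    (F := fun r θ => θ * Real.log (‖1 + r * Complex.exp (θ * Complex.I)‖))
    (f := fun θ => θ * Real.log (‖1 + Complex.exp (θ * Complex.I)‖))
    (l := 𝓝[<] (1:ℝ))
    (bound := fun _ => 2 * Real.log 2) ?_ ?_ ?_ ?_
  · convert key using 3
  · filter_upwards with r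
    apply Measurable.aestronglyMeasurable
    apply measurable_id.mul
    exact Real.measurable_log.comp (continuous_norm.measurable.comp (by fun_prop))
  · filter_upwards [hIco] with r hr
    filter_upwards with θ hθ
    rw [Set.uIoc_of_le (by positivity : (0:ℝ) ≤ π/2)] at hθ
    have h1 := abs_lower r θ hr.1 hθ.1.le hθ.2
    have h2 := abs_upper r θ hr.1 hr.2.le
    have hlog1 : 0 ≤ Real.log (‖1 + r * Complex.exp (θ * Complex.I)‖) :=
      Real.log_nonneg h1
    have hlog2 : Real.log (‖1 + r * Complex.exp (θ * Complex.I)‖) ≤ Real.log 2 :=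
      Real.log_le_log (by linarith) h2
    rw [Real.norm_eq_abs, abs_mul, abs_of_nonneg hlog1, abs_of_nonneg hθ.1.le]
    have hpi : θ ≤ 2 := by nlinarith [Real.pi_le_four, hθ.2]
    have : (0:ℝ) ≤ Real.log 2 := Real.log_nonneg one_le_two
    nlinarith
  · exact _root_.intervalIntegrable_const
  · filter_upwards with θ hθ
    rw [Set.uIoc_of_le (by positivity : (0:ℝ) ≤ π/2)] at hθ
    have hne : ‖1 + (1:ℝ) * Complex.exp (θ * Complex.I)‖ ≠ 0 := by
      have := abs_lower 1 θ zero_le_one hθ.1.le hθ.2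
      linarith
    have hcont : ContinuousAt
        (fun r : ℝ => θ * Real.log (‖1 + r * Complex.exp (θ * Complex.I)‖)) 1 := by
      apply ContinuousAt.mul continuousAt_const
      have hc : ContinuousAt (fun r : ℝ => ‖1 + r * Complex.exp (θ * Complex.I)‖) 1 := by
        apply continuous_norm.continuousAt.comp
        fun_prop
      exact ContinuousAt.comp (g := Real.log)
        (f := fun r : ℝ => ‖1 + r * Complex.exp (θ * Complex.I)‖) (x := 1)
        (Real.continuousAt_log hne) hc
    have h := hcont.tendsto.mono_left (nhdsWithin_le_nhds (s := Set.Iio (1:ℝ)))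
    simpa using h

lemma tendstoB :
    Tendsto (fun r : ℝ => ∑' n, aterm n * r ^ n) (𝓝[<] (1:ℝ)) (𝓝 (∑' n, aterm n)) := by
  have hIco : Set.Ico (0:ℝ) 1 ∈ 𝓝[<] (1:ℝ) :=
    Ico_mem_nhdsLT_of_mem (by constructor <;> norm_num)
  have := tendsto_tsum_of_dominated_convergence (𝓕 := 𝓝[<] (1:ℝ))
    (f := fun r (n : ℕ) => aterm n * r ^ n) (g := fun n => aterm n)
    (bound := fun n => |aterm n|) summable_abs_aterm ?_ ?_
  · exact this
  · intro n
    have : Tendsto (fun r : ℝ => aterm n * r ^ n) (𝓝 (1:ℝ)) (𝓝 (aterm n * 1 ^ n)) := by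
      apply Tendsto.const_mul
      exact (continuous_pow n).tendsto 1
    simpa using this.mono_left nhdsWithin_le_nhds
  · filter_upwards [hIco] with r hr n
    rw [Real.norm_eq_abs, abs_mul]
    calc |aterm n| * |r ^ n| ≤ |aterm n| * 1 := by
          apply mul_le_mul_of_nonneg_left _ (abs_nonneg _)
          rw [abs_pow, abs_of_nonneg hr.1]
          exact pow_le_one₀ hr.1 hr.2.le
      _ = |aterm n| := mul_one _


lemma abs_one_add_exp (θ : ℝ) (h1 : 0 ≤ θ) (h2 : θ ≤ π/2) :
    ‖1 + Complex.exp (θ * Complex.I)‖ = 2 * Real.cos (θ/2) := by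
  have hre : (1 + Complex.exp (θ * Complex.I)).re = 1 + Real.cos θ := by
    simp [Complex.add_re, Complex.exp_ofReal_mul_I_re]
  have him : (1 + Complex.exp (θ * Complex.I)).im = Real.sin θ := by
    rw [Complex.add_im, Complex.one_im, zero_add, Complex.exp_mul_I]
    simp [← Complex.ofReal_cos, ← Complex.ofReal_sin]
  have hcos : 0 ≤ Real.cos (θ/2) := by
    apply Real.cos_nonneg_of_mem_Icc
    constructor <;> [linarith [Real.pi_pos]; linarith]
  have hsq : Real.cos (θ/2)^2 = 1/2 + Real.cos θ / 2 := by
    have h := Real.cos_sq (θ/2)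
    rwa [show 2*(θ/2) = θ by ring] at h
  rw [Complex.norm_def, Complex.normSq_apply, hre, him]
  have hkey : (1 + Real.cos θ) * (1 + Real.cos θ) + Real.sin θ * Real.sin θ
      = (2 * Real.cos (θ/2))^2 := by
    have hpy := Real.sin_sq_add_cos_sq θ
    nlinarith
  rw [hkey, Real.sqrt_sq (by positivity)]

lemma integral_split :
    (∫ θ in (0:ℝ)..(π/2), θ * Real.log (‖1 + Complex.exp (θ * Complex.I)‖))
      = π^2/8 * Real.log 2 + ∫ θ in (0:ℝ)..(π/2), θ * Real.log (Real.cos (θ/2)) := by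
  have hpi : (0:ℝ) ≤ π/2 := by positivity
  have hcos : ∀ x ∈ Set.uIcc (0:ℝ) (π/2), 0 < Real.cos (x/2) := by
    intro x hx
    rw [Set.uIcc_of_le hpi] at hx
    apply Real.cos_pos_of_mem_Ioo
    constructor <;> [nlinarith [Real.pi_pos, hx.1]; nlinarith [Real.pi_pos, hx.2]]
  have hcongr : ∀ x ∈ Set.uIcc (0:ℝ) (π/2),
      x * Real.log (‖1 + Complex.exp (x * Complex.I)‖)
        = x * Real.log 2 + x * Real.log (Real.cos (x/2)) := by
    intro x hx
    have hx' := hx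
    rw [Set.uIcc_of_le hpi] at hx'
    rw [abs_one_add_exp x hx'.1 hx'.2,
      Real.log_mul (by norm_num) (ne_of_gt (hcos x hx))]
    ring
  rw [intervalIntegral.integral_congr hcongr]
  have hint1 : IntervalIntegrable (fun x : ℝ => x * Real.log 2) volume 0 (π/2) :=
    (continuous_id.mul continuous_const).intervalIntegrable _ _
  have hint2 : IntervalIntegrable (fun x : ℝ => x * Real.log (Real.cos (x/2))) volume 0 (π/2) := by
    apply ContinuousOn.intervalIntegrable
    apply ContinuousOn.mul continuousOn_id
    apply ContinuousOn.log
    · exact (Real.continuous_cos.comp (continuous_id.div_const 2)).continuousOn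
    · exact fun x hx => ne_of_gt (hcos x hx)
  rw [intervalIntegral.integral_add hint1 hint2]
  congr 1
  have : ∫ x in (0:ℝ)..(π/2), x * Real.log 2 = (∫ x in (0:ℝ)..(π/2), x) * Real.log 2 := by
    rw [← intervalIntegral.integral_mul_const]
  rw [this, integral_id]
  ring

lemma summable_inv_shift_pow {p : ℕ} (hp : 2 ≤ p) : Summable (fun k : ℕ => 1/((k:ℝ)+1)^p) := by
  have h : Summable (fun k : ℕ => 1/((k:ℝ))^p) :=
    (Real.summable_one_div_nat_pow).mpr (by omega)
  have := (summable_nat_add_iff 1).mpr h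
  simpa using this

lemma hGs : Summable (fun k : ℕ => (-1:ℝ)^k / (2*(k:ℝ)+1)^2) := by
  apply Summable.of_norm_bounded (summable_inv_shift_pow (p := 2) le_rfl)
  intro k
  rw [Real.norm_eq_abs, abs_div, abs_pow, abs_neg, abs_one, one_pow, abs_pow]
  have h1 : ((k:ℝ)+1)^2 ≤ |2*(k:ℝ)+1|^2 := by
    rw [abs_of_nonneg (by positivity)]
    nlinarith [Nat.cast_nonneg (α := ℝ) k]
  rw [one_div, one_div]
  exact inv_anti₀ (by positivity) h1

lemma hP : Summable (fun k : ℕ => 1 / (2*(k:ℝ)+1)^3) := by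
  apply Summable.of_nonneg_of_le (fun k => by positivity) _ (summable_inv_shift_pow (p := 2) le_rfl)
  intro k
  have hk : (0:ℝ) ≤ k := Nat.cast_nonneg k
  rw [one_div, one_div]
  apply inv_anti₀ (by positivity)
  nlinarith [hk, sq_nonneg ((k:ℝ)), mul_nonneg (mul_nonneg hk hk) hk]

lemma hZ : Summable (fun k : ℕ => 1 / ((k:ℝ)+1)^3) := summable_inv_shift_pow (by norm_num)

noncomputable def Psum : ℝ := ∑' k : ℕ, 1 / (2*(k:ℝ)+1)^3
noncomputable def Zsum : ℝ := ∑' k : ℕ, 1 / ((k:ℝ)+1)^3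

lemma sin_odd_mul (k : ℕ) : Real.sin ((2*k+1 : ℕ) * (π/2)) = (-1)^k := by
  have : ((2*k+1 : ℕ) : ℝ) * (π/2) = k * π + π/2 := by push_cast; ring
  rw [this, Real.sin_add, Real.sin_nat_mul_pi, Real.sin_pi_div_two, Real.cos_pi_div_two]
  have : Real.cos ((k:ℝ) * π) = (-1)^k := by
    have h := Real.cos_nat_mul_pi_sub (0:ℝ) k
    simpa using h
  rw [this]; ring

lemma cos_odd_mul (k : ℕ) : Real.cos ((2*k+1 : ℕ) * (π/2)) = 0 := by
  have : ((2*k+1 : ℕ) : ℝ) * (π/2) = k * π + π/2 := by push_cast; ring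
  rw [this, Real.cos_add, Real.sin_nat_mul_pi, Real.sin_pi_div_two, Real.cos_pi_div_two]
  ring

lemma cos_even_mul (k : ℕ) : Real.cos ((2*k : ℕ) * (π/2)) = (-1)^k := by
  have : ((2*k : ℕ) : ℝ) * (π/2) = k * π := by push_cast; ring
  rw [this]
  have h := Real.cos_nat_mul_pi_sub (0:ℝ) k
  simpa using h

lemma hasSum_pterm : HasSum pterm (∑' k : ℕ, (-1:ℝ)^k / (2*(k:ℝ)+1)^2) := by
  have heven : HasSum (fun k : ℕ => pterm (2*k)) 0 := by
    have : (fun k : ℕ => pterm (2*k)) = fun _ => (0:ℝ) := by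
      funext k
      unfold pterm
      have : ((2*k : ℕ) : ℝ) * (π/2) = k * π := by push_cast; ring
      rw [show ((2*k : ℕ) : ℝ) = ((2*k : ℕ) : ℝ) from rfl]
      push_cast
      rw [show 2*(k:ℝ) * (π/2) = k * π by ring, Real.sin_nat_mul_pi]
      simp
    rw [this]
    exact hasSum_zero
  have hodd : HasSum (fun k : ℕ => pterm (2*k+1)) (∑' k : ℕ, (-1:ℝ)^k / (2*(k:ℝ)+1)^2) := by
    have he : (fun k : ℕ => pterm (2*k+1)) = fun k : ℕ => (-1:ℝ)^k / (2*(k:ℝ)+1)^2 := by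
      funext k
      unfold pterm
      rw [show ((2*k+1 : ℕ):ℝ) * (π/2) = ((2*k+1 : ℕ):ℝ) * (π/2) from rfl]
      rw [sin_odd_mul]
      have h2 : (-1:ℝ)^(2*k+1+1) = 1 := by
        rw [pow_succ, pow_succ]
        simp [pow_mul]
      rw [h2]
      push_cast
      ring
    rw [he]
    exact hGs.hasSum
  have h9 := HasSum.even_add_odd (f := pterm) heven hodd
  rwa [zero_add] at h9

lemma hasSum_qterm : HasSum qterm (-(3/4) * Psum) := by
  have hodd : HasSum (fun k : ℕ => qterm (2*k+1)) (-Psum) := by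
    have he : (fun k : ℕ => qterm (2*k+1)) = fun k : ℕ => -(1 / (2*(k:ℝ)+1)^3) := by
      funext k
      unfold qterm
      rw [cos_odd_mul]
      have h2 : (-1:ℝ)^(2*k+1+1) = 1 := by
        rw [pow_succ, pow_succ]; simp [pow_mul]
      rw [h2]
      push_cast
      ring
    rw [he]
    exact hP.hasSum.neg
  have heven : HasSum (fun k : ℕ => qterm (2*k)) ((1/4) * Psum) := by
    have hee : HasSum (fun j : ℕ => qterm (2*(2*j))) 0 := by
      have : (fun j : ℕ => qterm (2*(2*j))) = fun _ => (0:ℝ) := by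
        funext j
        unfold qterm
        rw [show 2*(2*j) = 2*(2*j) from rfl, cos_even_mul]
        simp [pow_mul]
      rw [this]; exact hasSum_zero
    have heo : HasSum (fun j : ℕ => qterm (2*(2*j+1))) ((1/4) * Psum) := by
      have he : (fun j : ℕ => qterm (2*(2*j+1))) = fun j : ℕ => (1/4) * (1 / (2*(j:ℝ)+1)^3) := by
        funext j
        unfold qterm
        rw [cos_even_mul]
        have h1 : (-1:ℝ)^(2*j+1) = -1 := by
          rw [pow_succ]; simp [pow_mul]
        have h2 : (-1:ℝ)^(2*(2*j+1)+1) = -1 := by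
          rw [pow_succ]; simp [pow_mul]
        rw [h1, h2]
        have h3 : ((2*(2*j+1) : ℕ) : ℝ)^3 = 8 * (2*(j:ℝ)+1)^3 := by push_cast; ring
        rw [h3]
        have h4 : (2*(j:ℝ)+1)^3 ≠ 0 := by positivity
        field_simp
        ring
      rw [he]
      have h := hP.hasSum.mul_left (1/4:ℝ)
      have h2 : (1/4:ℝ) * Psum = (1/4:ℝ) * ∑' k : ℕ, 1 / (2*(k:ℝ)+1)^3 := by unfold Psum; ring
      rw [h2]; exact h
    have h8 := HasSum.even_add_odd (f := fun k : ℕ => qterm (2*k)) hee heo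
    rwa [zero_add] at h8
  have h9 := HasSum.even_add_odd (f := qterm) heven hodd
  have h10 : (1/4:ℝ)*Psum + -Psum = -(3/4)*Psum := by ring
  rwa [h10] at h9

lemma Z_eq : Zsum = Psum + Zsum/8 := by
  have heven : HasSum (fun j : ℕ => 1 / ((((2*j : ℕ)):ℝ)+1)^3) Psum := by
    have he : (fun j : ℕ => 1 / ((((2*j : ℕ)):ℝ)+1)^3) = fun j : ℕ => 1 / (2*(j:ℝ)+1)^3 := by
      funext j; push_cast; ring_nf
    rw [he]; exact hP.hasSum
  have hodd : HasSum (fun j : ℕ => 1 / ((((2*j+1 : ℕ)):ℝ)+1)^3) (Zsum/8) := by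
    have he : (fun j : ℕ => 1 / ((((2*j+1 : ℕ)):ℝ)+1)^3)
        = fun j : ℕ => (1/8) * (1 / ((j:ℝ)+1)^3) := by
      funext j
      have h4 : ((j:ℝ)+1)^3 ≠ 0 := by positivity
      push_cast
      field_simp
      ring
    rw [he]
    have h := hZ.hasSum.mul_left (1/8 : ℝ)
    have h2 : Zsum/8 = (1/8:ℝ) * ∑' k : ℕ, 1 / ((k:ℝ)+1)^3 := by unfold Zsum; ring
    rw [h2]; exact h
  have h := HasSum.even_add_odd (f := fun k : ℕ => 1 / ((k:ℝ)+1)^3) heven hodd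
  exact (hZ.hasSum.unique h)

lemma T_eq : (∑' n : ℕ, (-1 : ℝ) ^ (n + 1 + 1) / ((n : ℝ) + 1) ^ 3) = 6/7 * Psum := by
  have heven : HasSum (fun j : ℕ => (-1:ℝ)^(2*j+1+1) / (((2*j : ℕ):ℝ)+1)^3) Psum := by
    have he : (fun j : ℕ => (-1:ℝ)^(2*j+1+1) / (((2*j : ℕ):ℝ)+1)^3)
        = fun j : ℕ => 1 / (2*(j:ℝ)+1)^3 := by
      funext j
      have h2 : (-1:ℝ)^(2*j+1+1) = 1 := by rw [pow_succ, pow_succ]; simp [pow_mul]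
      rw [h2]; push_cast; ring_nf
    rw [he]; exact hP.hasSum
  have hodd : HasSum (fun j : ℕ => (-1:ℝ)^(2*j+1+1+1) / (((2*j+1 : ℕ):ℝ)+1)^3) (-(Zsum/8)) := by
    have he : (fun j : ℕ => (-1:ℝ)^(2*j+1+1+1) / (((2*j+1 : ℕ):ℝ)+1)^3)
        = fun j : ℕ => -((1/8) * (1 / ((j:ℝ)+1)^3)) := by
      funext j
      have h2 : (-1:ℝ)^(2*j+1+1+1) = -1 := by rw [pow_succ]; rw [pow_succ, pow_succ]; simp [pow_mul]
      rw [h2]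
      have h4 : ((j:ℝ)+1)^3 ≠ 0 := by positivity
      push_cast
      field_simp
      ring
    rw [he]
    have h := (hZ.hasSum.mul_left (1/8 : ℝ)).neg
    have h2 : -(Zsum/8) = -((1/8:ℝ) * ∑' k : ℕ, 1 / ((k:ℝ)+1)^3) := by unfold Zsum; ring
    rw [h2]; exact h
  have h := HasSum.even_add_odd (f := fun n : ℕ => (-1:ℝ)^(n+1+1) / ((n:ℝ)+1)^3) heven hodd
  rw [h.tsum_eq]
  have h8 : Zsum = Psum + Zsum/8 := Z_eq
  have h9 : Zsum = 8/7 * Psum := by linarith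
  rw [h9]; ring

theorem integral_theta_log_cos_half :
    ∫ θ in (0 : ℝ)..(π / 2), θ * Real.log (Real.cos (θ / 2))
      = -(π ^ 2 / 8) * Real.log 2
        + (π / 2) * ∑' n : ℕ, (-1 : ℝ) ^ n / (2 * (n : ℝ) + 1) ^ 2
        - (7 / 8) * ∑' n : ℕ, (-1 : ℝ) ^ (n + 1 + 1) / ((n : ℝ) + 1) ^ 3 := by
  have hIco : Set.Ico (0:ℝ) 1 ∈ 𝓝[<] (1:ℝ) :=
    Ico_mem_nhdsLT_of_mem (by constructor <;> norm_num)
  have heq : (fun r : ℝ => ∫ θ in (0:ℝ)..(π/2),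
      θ * Real.log (‖1 + r * Complex.exp (θ * Complex.I)‖))
      =ᶠ[𝓝[<] (1:ℝ)] fun r : ℝ => ∑' n, aterm n * r ^ n := by
    filter_upwards [hIco] with r hr
    exact ((hasSum_I_r hr.1 hr.2).tsum_eq).symm
  have hA' : Tendsto (fun r : ℝ => ∑' n, aterm n * r ^ n) (𝓝[<] (1:ℝ))
      (𝓝 (∫ θ in (0:ℝ)..(π/2), θ * Real.log (‖1 + Complex.exp (θ * Complex.I)‖))) :=
    tendstoA.congr' heq
  have huniq : (∫ θ in (0:ℝ)..(π/2), θ * Real.log (‖1 + Complex.exp (θ * Complex.I)‖))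
      = ∑' n, aterm n := tendsto_nhds_unique hA' tendstoB
  have hsum : HasSum aterm
      ((π/2) * (∑' k : ℕ, (-1:ℝ)^k / (2*(k:ℝ)+1)^2) + -(3/4) * Psum) := by
    have h := (hasSum_pterm.mul_left (π/2)).add hasSum_qterm
    exact h
  have hts : (∑' n, aterm n)
      = (π/2) * (∑' k : ℕ, (-1:ℝ)^k / (2*(k:ℝ)+1)^2) + -(3/4) * Psum := hsum.tsum_eq
  have hsplit := integral_split
  have hT := T_eq
  rw [huniq, hts] at hsplit
  rw [hT]
  linarith [hsplit]
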